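/- arXiv:1010.4182 — 2 statements merged into one kernel-verified Lean document; each statement's English description precedes it below -/
import Mathlib

section
/- Let K : ℝ → ℝ be supported on [−A, A], Lipschitz on [−A, A] with bounded derivative, with K(−A)² + K(A)² > 0, and λ_K = ∫ K² > 0. Then as s → 0⁺, ∫ (K(x) − K(x+s))² dx = (K(−A)² + K(A)²) s + o(s); consequently r(s) = 1 − K₁ s + o(s) where r(s) = λ_K⁻¹ ∫ K(x)K(x+s) dx and K₁ = (K(−A)² + K(A)²)/(2λ_K). -/
open MeasureTheory Filter Asymptotics

set_option maxHeartbeats 1000000 in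
/-- For a Lipschitz kernel `K` supported on `[-A, A]` with bounded derivative and
`K(−A)² + K(A)² > 0`, `λ_K = ∫ K² > 0`, as `s → 0⁺`:
`∫ (K(x) − K(x+s))² dx = (K(−A)² + K(A)²) s + o(s)`, and consequently
`r(s) = 1 − K₁ s + o(s)` with `K₁ = (K(−A)² + K(A)²)/(2 λ_K)`. -/
theorem kernel_increment_sq_asymp (K : ℝ → ℝ) (A : ℝ) (hA : 0 < A) (L : NNReal)
    (hsupp : ∀ x, x ∉ Set.Icc (-A) A → K x = 0)
    (hlip : LipschitzOnWith L K (Set.Icc (-A) A))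
    (hdiff : DifferentiableOn ℝ K (Set.Ioo (-A) A))
    (hderiv_bdd : ∃ M, ∀ x ∈ Set.Ioo (-A) A, |derivWithin K (Set.Ioo (-A) A) x| ≤ M)
    (hK2 : Integrable (fun x => (K x) ^ 2))
    (hend : 0 < K (-A) ^ 2 + K A ^ 2)
    (hlam : 0 < ∫ x, (K x) ^ 2) :
    (fun s : ℝ => (∫ x, (K x - K (x + s)) ^ 2) - (K (-A) ^ 2 + K A ^ 2) * s)
        =o[nhdsWithin 0 (Set.Ioi 0)] (fun s : ℝ => s)
    ∧ (fun s : ℝ =>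
          (∫ x, K x * K (x + s)) / (∫ x, (K x) ^ 2)
            - (1 - (K (-A) ^ 2 + K A ^ 2) / (2 * ∫ x, (K x) ^ 2) * s))
        =o[nhdsWithin 0 (Set.Ioi 0)] (fun s : ℝ => s) := by
  have hmA : (-A) ∈ Set.Icc (-A) A := ⟨le_refl _, by linarith⟩
  have hpA : A ∈ Set.Icc (-A) A := ⟨by linarith, le_refl _⟩
  set c₁ : ℝ := K (-A) with hc1
  set c₂ : ℝ := K A with hc2
  -- Lipschitz distance estimate
  have hKdist : ∀ x ∈ Set.Icc (-A) A, ∀ y ∈ Set.Icc (-A) A,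
      |K x - K y| ≤ (L : ℝ) * |x - y| := by
    intro x hx y hy
    have := hlip.dist_le_mul x hx y hy
    simpa [Real.dist_eq] using this
  -- global bound
  set B : ℝ := |c₁| + (L : ℝ) * (2 * A) with hB
  have hKbd : ∀ x, |K x| ≤ B := by
    intro x
    by_cases hx : x ∈ Set.Icc (-A) A
    · have h1 := hKdist x hx (-A) hmA
      have h2 : |x - (-A)| ≤ 2 * A := by
        rw [abs_of_nonneg (by linarith [hx.1])]
        linarith [hx.2]
      have := abs_sub_abs_le_abs_sub (K x) c₁
      have h3 : (L : ℝ) * |x - (-A)| ≤ (L : ℝ) * (2 * A) :=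
        mul_le_mul_of_nonneg_left h2 L.2
      simp only [hB]; linarith
    · rw [hsupp x hx]
      simp only [abs_zero, hB]
      positivity
  have hB0 : 0 ≤ B := le_trans (abs_nonneg _) (hKbd 0)
  -- measurability
  have hKm : AEStronglyMeasurable K (volume : Measure ℝ) := by
    have hind : K = Set.indicator (Set.Icc (-A) A) K := by
      funext x
      by_cases hx : x ∈ Set.Icc (-A) A
      · rw [Set.indicator_of_mem hx]
      · rw [Set.indicator_of_notMem hx, hsupp x hx]
    have hc : AEMeasurable K (volume.restrict (Set.Icc (-A) A)) :=
      hlip.continuousOn.aemeasurable measurableSet_Icc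
    rw [hind]
    exact ((aemeasurable_indicator_iff measurableSet_Icc).2 hc).aestronglyMeasurable
  have hKms : ∀ s : ℝ, AEStronglyMeasurable (fun x => K (x + s)) (volume : Measure ℝ) :=
    fun s => hKm.comp_measurePreserving (measurePreserving_add_right volume s)
  have hgm : ∀ s : ℝ,
      AEStronglyMeasurable (fun x => (K x - K (x + s)) ^ 2) (volume : Measure ℝ) :=
    fun s => (hKm.sub (hKms s)).pow 2
  -- interval integrability of the squared increment
  have hIIg : ∀ (s a b : ℝ),
      IntervalIntegrable (fun x => (K x - K (x + s)) ^ 2) volume a b := by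
    intro s a b
    constructor <;>
    · refine Integrable.mono' (g := fun _ => (2 * B) ^ 2)
        (integrableOn_const measure_Ioc_lt_top.ne)
        ((hgm s).restrict) (Eventually.of_forall fun x => ?_)
      have h1 := hKbd x
      have h2 := hKbd (x + s)
      have : |K x - K (x + s)| ≤ 2 * B := by
        calc |K x - K (x + s)| ≤ |K x| + |K (x + s)| := abs_sub _ _
        _ ≤ 2 * B := by linarith
      rw [Real.norm_eq_abs, abs_pow]
      exact pow_le_pow_left₀ (abs_nonneg _) this 2
  -- Main quantitative estimate
  set C : ℝ := (L : ℝ) * ((L : ℝ) + 2 * |c₁|) + 2 * A * (L : ℝ) ^ 2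
      + (L : ℝ) * ((L : ℝ) + 2 * |c₂|) with hC
  have key : ∀ s ∈ Set.Ioc (0 : ℝ) (min A 1),
      |(∫ x, (K x - K (x + s)) ^ 2) - (c₁ ^ 2 + c₂ ^ 2) * s| ≤ C * s ^ 2 := by
    intro s hs
    obtain ⟨hs0, hs1⟩ := hs
    have hsA : s ≤ A := le_trans hs1 (min_le_left _ _)
    have hs1' : s ≤ 1 := le_trans hs1 (min_le_right _ _)
    set g : ℝ → ℝ := fun x => (K x - K (x + s)) ^ 2 with hg
    -- reduce to an interval integral
    have hsupp' : ∀ x, x ∉ Set.Icc (-A - s) A → g x = 0 := by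
      intro x hx
      simp only [Set.mem_Icc, not_and_or, not_le] at hx
      rcases hx with hx | hx
      · have h1 : K x = 0 := hsupp x (by simp only [Set.mem_Icc]; push_neg; intro h; linarith)
        have h2 : K (x + s) = 0 := hsupp _ (by simp only [Set.mem_Icc]; push_neg; intro h; linarith)
        simp [hg, h1, h2]
      · have h1 : K x = 0 := hsupp x (by simp only [Set.mem_Icc]; push_neg; intro h; linarith)
        have h2 : K (x + s) = 0 := hsupp _ (by simp only [Set.mem_Icc]; push_neg; intro h; linarith)
        simp [hg, h1, h2]
    have hint : (∫ x, g x) = ∫ x in (-A - s)..A, g x := by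
      rw [intervalIntegral.integral_of_le (by linarith), ← integral_Icc_eq_integral_Ioc]
      exact (setIntegral_eq_integral_of_forall_compl_eq_zero hsupp').symm
    -- split
    have hsplit : (∫ x in (-A - s)..A, g x)
        = (∫ x in (-A - s)..(-A), g x) + (∫ x in (-A)..(A - s), g x)
          + (∫ x in (A - s)..A, g x) := by
      rw [intervalIntegral.integral_add_adjacent_intervals (hIIg s _ _) (hIIg s _ _),
        intervalIntegral.integral_add_adjacent_intervals (hIIg s _ _) (hIIg s _ _)]
    -- first piece
    have E1 : |(∫ x in (-A - s)..(-A), g x) - c₁ ^ 2 * s|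
        ≤ ((L : ℝ) * s * ((L : ℝ) * s + 2 * |c₁|)) * s := by
      have heq : (∫ x in (-A - s)..(-A), g x) - c₁ ^ 2 * s
          = ∫ x in (-A - s)..(-A), (g x - c₁ ^ 2) := by
        rw [intervalIntegral.integral_sub (hIIg s _ _) intervalIntegrable_const,
          intervalIntegral.integral_const]
        simp only [smul_eq_mul, hg]
        ring
      rw [heq]
      have hae : ∀ᵐ x : ℝ, x ∈ Set.uIoc (-A - s) (-A) → ‖g x - c₁ ^ 2‖
          ≤ (L : ℝ) * s * ((L : ℝ) * s + 2 * |c₁|) := by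
        have hne : ∀ᵐ x : ℝ, x ≠ -A := by
          rw [ae_iff]
          simp only [ne_eq, not_not, Set.setOf_eq_eq_singleton]
          exact measure_singleton _
        filter_upwards [hne] with x hxne hx
        rw [Set.uIoc_of_le (by linarith)] at hx
        obtain ⟨hx1, hx2⟩ := hx
        have hx2' : x < -A := lt_of_le_of_ne hx2 hxne
        have hKx : K x = 0 := hsupp x (by simp only [Set.mem_Icc]; push_neg; intro h; linarith)
        have hxs : x + s ∈ Set.Icc (-A) A := ⟨by linarith, by linarith⟩
        have hd : |K (x + s) - c₁| ≤ (L : ℝ) * s := by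
          have := hKdist (x + s) hxs (-A) hmA
          have h2 : |x + s - (-A)| ≤ s := by
            rw [abs_of_nonneg (by linarith)]; linarith
          calc |K (x + s) - c₁| ≤ (L : ℝ) * |x + s - (-A)| := this
          _ ≤ (L : ℝ) * s := mul_le_mul_of_nonneg_left h2 L.2
        have hsum : |K (x + s) + c₁| ≤ (L : ℝ) * s + 2 * |c₁| := by
          have := abs_add_le (K (x + s) - c₁) (2 * c₁)
          have h2 : |2 * c₁| = 2 * |c₁| := by rw [abs_mul]; norm_num
          calc |K (x + s) + c₁| = |(K (x + s) - c₁) + 2 * c₁| := by ring_nf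
          _ ≤ |K (x + s) - c₁| + |2 * c₁| := abs_add_le _ _
          _ ≤ (L : ℝ) * s + 2 * |c₁| := by rw [h2]; linarith
        have hgx : g x - c₁ ^ 2 = (K (x + s) - c₁) * (K (x + s) + c₁) := by
          simp only [hg, hKx]; ring
        rw [Real.norm_eq_abs, hgx, abs_mul]
        exact mul_le_mul hd hsum (abs_nonneg _) (by positivity)
      have := intervalIntegral.norm_integral_le_of_norm_le_const_ae hae
      rw [Real.norm_eq_abs] at this
      calc |∫ x in (-A - s)..(-A), (g x - c₁ ^ 2)|
          ≤ ((L : ℝ) * s * ((L : ℝ) * s + 2 * |c₁|)) * |(-A) - (-A - s)| := this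
      _ = ((L : ℝ) * s * ((L : ℝ) * s + 2 * |c₁|)) * s := by
          congr 1
          rw [abs_of_nonneg (by linarith)]; ring
    -- middle piece
    have E2 : |∫ x in (-A)..(A - s), g x| ≤ ((L : ℝ) ^ 2 * s ^ 2) * (2 * A) := by
      have hb : ∀ x ∈ Set.uIoc (-A) (A - s), ‖g x‖ ≤ (L : ℝ) ^ 2 * s ^ 2 := by
        intro x hx
        rw [Set.uIoc_of_le (by linarith)] at hx
        obtain ⟨hx1, hx2⟩ := hx
        have hx' : x ∈ Set.Icc (-A) A := ⟨le_of_lt hx1, by linarith⟩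
        have hxs : x + s ∈ Set.Icc (-A) A := ⟨by linarith, by linarith⟩
        have hd : |K x - K (x + s)| ≤ (L : ℝ) * s := by
          have := hKdist x hx' (x + s) hxs
          have h2 : |x - (x + s)| = s := by
            rw [abs_of_nonpos (by linarith)]; ring
          rw [h2] at this; exact this
        calc ‖g x‖ = |K x - K (x + s)| ^ 2 := by
              simp only [hg, Real.norm_eq_abs, abs_pow, sq_abs]
        _ ≤ ((L : ℝ) * s) ^ 2 := pow_le_pow_left₀ (abs_nonneg _) hd 2
        _ = (L : ℝ) ^ 2 * s ^ 2 := by ring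
      have := intervalIntegral.norm_integral_le_of_norm_le_const hb
      rw [Real.norm_eq_abs] at this
      calc |∫ x in (-A)..(A - s), g x| ≤ (L : ℝ) ^ 2 * s ^ 2 * |A - s - (-A)| := this
      _ ≤ ((L : ℝ) ^ 2 * s ^ 2) * (2 * A) := by
          apply mul_le_mul_of_nonneg_left _ (by positivity)
          rw [abs_of_nonneg (by linarith)]; linarith
    -- last piece
    have E3 : |(∫ x in (A - s)..A, g x) - c₂ ^ 2 * s|
        ≤ ((L : ℝ) * s * ((L : ℝ) * s + 2 * |c₂|)) * s := by
      have heq : (∫ x in (A - s)..A, g x) - c₂ ^ 2 * s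
          = ∫ x in (A - s)..A, (g x - c₂ ^ 2) := by
        rw [intervalIntegral.integral_sub (hIIg s _ _) intervalIntegrable_const,
          intervalIntegral.integral_const]
        simp only [smul_eq_mul, hg]
        ring
      rw [heq]
      have hb : ∀ x ∈ Set.uIoc (A - s) A, ‖g x - c₂ ^ 2‖
          ≤ (L : ℝ) * s * ((L : ℝ) * s + 2 * |c₂|) := by
        intro x hx
        rw [Set.uIoc_of_le (by linarith)] at hx
        obtain ⟨hx1, hx2⟩ := hx
        have hKxs : K (x + s) = 0 := hsupp _ (by
          simp only [Set.mem_Icc]; push_neg; intro h; linarith)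
        have hx' : x ∈ Set.Icc (-A) A := ⟨by linarith, hx2⟩
        have hd : |K x - c₂| ≤ (L : ℝ) * s := by
          have := hKdist x hx' A hpA
          have h2 : |x - A| ≤ s := by
            rw [abs_of_nonpos (by linarith)]; linarith
          calc |K x - c₂| ≤ (L : ℝ) * |x - A| := this
          _ ≤ (L : ℝ) * s := mul_le_mul_of_nonneg_left h2 L.2
        have hsum : |K x + c₂| ≤ (L : ℝ) * s + 2 * |c₂| := by
          have h2 : |2 * c₂| = 2 * |c₂| := by rw [abs_mul]; norm_num
          calc |K x + c₂| = |(K x - c₂) + 2 * c₂| := by ring_nf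
          _ ≤ |K x - c₂| + |2 * c₂| := abs_add_le _ _
          _ ≤ (L : ℝ) * s + 2 * |c₂| := by rw [h2]; linarith
        have hgx : g x - c₂ ^ 2 = (K x - c₂) * (K x + c₂) := by
          simp only [hg, hKxs]; ring
        rw [Real.norm_eq_abs, hgx, abs_mul]
        exact mul_le_mul hd hsum (abs_nonneg _) (by positivity)
      have := intervalIntegral.norm_integral_le_of_norm_le_const hb
      rw [Real.norm_eq_abs] at this
      calc |∫ x in (A - s)..A, (g x - c₂ ^ 2)|
          ≤ ((L : ℝ) * s * ((L : ℝ) * s + 2 * |c₂|)) * |A - (A - s)| := this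
      _ = ((L : ℝ) * s * ((L : ℝ) * s + 2 * |c₂|)) * s := by
          congr 1
          rw [abs_of_nonneg (by linarith)]; ring
    -- combine
    have hdecomp : (∫ x, g x) - (c₁ ^ 2 + c₂ ^ 2) * s
        = ((∫ x in (-A - s)..(-A), g x) - c₁ ^ 2 * s)
          + (∫ x in (-A)..(A - s), g x)
          + ((∫ x in (A - s)..A, g x) - c₂ ^ 2 * s) := by
      rw [hint, hsplit]; ring
    have habs : |(∫ x, g x) - (c₁ ^ 2 + c₂ ^ 2) * s|
        ≤ |(∫ x in (-A - s)..(-A), g x) - c₁ ^ 2 * s|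
          + |∫ x in (-A)..(A - s), g x|
          + |(∫ x in (A - s)..A, g x) - c₂ ^ 2 * s| := by
      rw [hdecomp]
      exact abs_add_three _ _ _
    have hL0 : (0 : ℝ) ≤ (L : ℝ) := L.2
    have hfin : ((L : ℝ) * s * ((L : ℝ) * s + 2 * |c₁|)) * s
          + ((L : ℝ) ^ 2 * s ^ 2) * (2 * A)
          + ((L : ℝ) * s * ((L : ℝ) * s + 2 * |c₂|)) * s ≤ C * s ^ 2 := by
      rw [hC]
      have h3 : s ^ 3 ≤ s ^ 2 := by nlinarith
      have h4 : (L : ℝ) ^ 2 * s ^ 3 ≤ (L : ℝ) ^ 2 * s ^ 2 :=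
        mul_le_mul_of_nonneg_left h3 (sq_nonneg _)
      nlinarith [h4, abs_nonneg c₁, abs_nonneg c₂, sq_nonneg s]
    calc |(∫ x, g x) - (c₁ ^ 2 + c₂ ^ 2) * s|
        ≤ _ := habs
    _ ≤ C * s ^ 2 := le_trans (by linarith [E1, E2, E3]) hfin
  -- first conclusion
  have hmin : (0 : ℝ) < min A 1 := lt_min hA one_pos
  have hmem : Set.Ioc (0 : ℝ) (min A 1) ∈ nhdsWithin (0 : ℝ) (Set.Ioi 0) :=
    Ioc_mem_nhdsGT_of_mem ⟨le_refl _, hmin⟩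
  have hbigO : (fun s : ℝ => (∫ x, (K x - K (x + s)) ^ 2) - (c₁ ^ 2 + c₂ ^ 2) * s)
      =O[nhdsWithin 0 (Set.Ioi 0)] (fun s : ℝ => s ^ 2) := by
    rw [isBigO_iff]
    refine ⟨C, ?_⟩
    filter_upwards [hmem] with s hs
    rw [Real.norm_eq_abs, Real.norm_eq_abs, abs_pow]
    calc |(∫ x, (K x - K (x + s)) ^ 2) - (c₁ ^ 2 + c₂ ^ 2) * s| ≤ C * s ^ 2 := key s hs
    _ ≤ C * |s| ^ 2 := by rw [sq_abs]
  have hsq : (fun s : ℝ => s ^ 2) =o[nhdsWithin 0 (Set.Ioi 0)] (fun s : ℝ => s) := by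
    rw [isLittleO_iff]
    intro c hc
    have hball : Set.Ioc (0 : ℝ) c ∈ nhdsWithin (0 : ℝ) (Set.Ioi 0) :=
      Ioc_mem_nhdsGT_of_mem ⟨le_refl _, hc⟩
    filter_upwards [hball] with s hs
    rw [Real.norm_eq_abs, Real.norm_eq_abs, abs_pow, pow_two]
    have : |s| ≤ c := by rw [abs_of_pos hs.1]; exact hs.2
    exact mul_le_mul_of_nonneg_right this (abs_nonneg _)
  have first : (fun s : ℝ => (∫ x, (K x - K (x + s)) ^ 2) - (c₁ ^ 2 + c₂ ^ 2) * s)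
      =o[nhdsWithin 0 (Set.Ioi 0)] (fun s : ℝ => s) := hbigO.trans_isLittleO hsq
  refine ⟨first, ?_⟩
  -- second conclusion
  set lam : ℝ := ∫ x, (K x) ^ 2 with hlamdef
  have hlam0 : lam ≠ 0 := ne_of_gt hlam
  have hidentity : ∀ s : ℝ,
      (∫ x, (K x - K (x + s)) ^ 2) = 2 * lam - 2 * ∫ x, K x * K (x + s) := by
    intro s
    have hKs2 : Integrable (fun x => (K (x + s)) ^ 2) := hK2.comp_add_right s
    have hcross : Integrable (fun x => K x * K (x + s)) := by
      refine Integrable.mono' ((hK2.add hKs2).div_const 2)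
        (hKm.mul (hKms s)) (Eventually.of_forall fun x => ?_)
      rw [Real.norm_eq_abs, abs_mul]
      have h1 : 2 * (|K x| * |K (x + s)|) ≤ |K x| ^ 2 + |K (x + s)| ^ 2 := by
        nlinarith [sq_nonneg (|K x| - |K (x + s)|)]
      have h2 : |K x| ^ 2 = K x ^ 2 := sq_abs _
      have h3 : |K (x + s)| ^ 2 = K (x + s) ^ 2 := sq_abs _
      simp only [Pi.add_apply]
      linarith
    have hexp : ∀ x : ℝ, (K x - K (x + s)) ^ 2
        = ((K x) ^ 2 + (K (x + s)) ^ 2) - 2 * (K x * K (x + s)) := by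
      intro x; ring
    have htrans : (∫ x, (K (x + s)) ^ 2) = lam :=
      integral_add_right_eq_self (fun x => (K x) ^ 2) s
    calc (∫ x, (K x - K (x + s)) ^ 2)
        = ∫ x, (((K x) ^ 2 + (K (x + s)) ^ 2) - 2 * (K x * K (x + s))) := by
          simp_rw [hexp]
    _ = (∫ x, ((K x) ^ 2 + (K (x + s)) ^ 2)) - ∫ x, 2 * (K x * K (x + s)) :=
          integral_sub (hK2.add hKs2) (hcross.const_mul 2)
    _ = ((∫ x, (K x) ^ 2) + ∫ x, (K (x + s)) ^ 2) - 2 * ∫ x, K x * K (x + s) := by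
          rw [integral_add hK2 hKs2, integral_const_mul]
    _ = 2 * lam - 2 * ∫ x, K x * K (x + s) := by rw [htrans, ← hlamdef]; ring
  have heq2 : (fun s : ℝ =>
      (∫ x, K x * K (x + s)) / lam - (1 - (c₁ ^ 2 + c₂ ^ 2) / (2 * lam) * s))
      = fun s : ℝ => (-(1 / (2 * lam)))
        * ((∫ x, (K x - K (x + s)) ^ 2) - (c₁ ^ 2 + c₂ ^ 2) * s) := by
    funext s
    set D : ℝ := ∫ x, (K x - K (x + s)) ^ 2 with hD
    set P : ℝ := ∫ x, K x * K (x + s) with hP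
    have h := hidentity s
    rw [← hD, ← hP] at h
    rw [h]
    field_simp
    ring
  calc (fun s : ℝ =>
      (∫ x, K x * K (x + s)) / lam - (1 - (c₁ ^ 2 + c₂ ^ 2) / (2 * lam) * s))
      = fun s : ℝ => (-(1 / (2 * lam)))
        * ((∫ x, (K x - K (x + s)) ^ 2) - (c₁ ^ 2 + c₂ ^ 2) * s) := heq2
  _ =o[nhdsWithin 0 (Set.Ioi 0)] (fun s : ℝ => s) := first.const_mul_left _
end

section
/- Let K : ℝ → ℝ be a bounded kernel supported on [−1,1] and f a bounded density on ℝ with bounded derivatives up to order 2. If X has density f, then for each fixed s, t and bandwidth b > 0, |E[K(X/b − s) K(X/b − t)] − b √(f(bs) f(bt)) λ_K r(s − t)| ≤ C b², where λ_K = ∫K², r(u) = λ_K⁻¹ ∫ K(x) K(x+u) dx, and C depends only on K and the bounds on f and its derivatives. -/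
open MeasureTheory

lemma abs_sqrt_mul_sub (p q : ℝ) (hp : 0 ≤ p) (hq : 0 ≤ q) :
    |Real.sqrt (p * q) - p| ≤ |q - p| := by
  have ha := Real.sqrt_nonneg p
  have hb := Real.sqrt_nonneg q
  have hp' : Real.sqrt p * Real.sqrt p = p := Real.mul_self_sqrt hp
  have hq' : Real.sqrt q * Real.sqrt q = q := Real.mul_self_sqrt hq
  rw [Real.sqrt_mul hp]
  set a := Real.sqrt p
  set b := Real.sqrt q
  have h1 : |a * b - p| = a * |b - a| := by
    rw [← hp', ← mul_sub, abs_mul, abs_of_nonneg ha]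
  have h2 : |q - p| = (b + a) * |b - a| := by
    have e : q - p = (b + a) * (b - a) := by rw [← hp', ← hq']; ring
    rw [e, abs_mul, abs_of_nonneg (by linarith)]
  rw [h1, h2]
  exact mul_le_mul_of_nonneg_right (by linarith) (abs_nonneg _)

/-- Covariance approximation (used in Lemma 4.8): for a bounded Lipschitz kernel `K`
supported on `[-1,1]` and a `C²` density `f` with bounded derivatives, there is a
constant `C` depending only on `K` and the bounds on `f`, `f'`, `f''` such that for all
`s, t` and all `b > 0`,
`|E[K(X/b − s)K(X/b − t)] − b √(f(bs)f(bt)) λ_K r(s−t)| ≤ C b²`. -/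
theorem covariance_kernel_approx (K f : ℝ → ℝ) (L : NNReal) (M : ℝ)
    (hsupp : ∀ x, x ∉ Set.Icc (-1 : ℝ) 1 → K x = 0)
    (hKbdd : ∀ x, |K x| ≤ M)
    (hlip : LipschitzWith L K)
    (hf : ContDiff ℝ 2 f)
    (hfpos : ∀ x, 0 ≤ f x)
    (hfint : ∫ x, f x = 1)
    (hfbdd : ∀ x, |f x| ≤ M)
    (hf'bdd : ∀ x, |deriv f x| ≤ M)
    (hf''bdd : ∀ x, |deriv (deriv f) x| ≤ M) :
    ∃ C > (0 : ℝ), ∀ (s t b : ℝ), 0 < b →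
      |(∫ x, K (x / b - s) * K (x / b - t) * f x)
          - b * Real.sqrt (f (b * s) * f (b * t)) * (∫ x, (K x) ^ 2)
            * ((∫ x, K x * K (x + (s - t))) / (∫ x, (K x) ^ 2))|
        ≤ C * b ^ 2 := by
  have hM0 : 0 ≤ M := (abs_nonneg _).trans (hKbdd 0)
  have hKc : Continuous K := hlip.continuous
  have hfc : Continuous f := hf.continuous
  have hflip : ∀ x y : ℝ, |f x - f y| ≤ M * |x - y| := by
    intro x y
    have hdiff : ∀ z ∈ (Set.univ : Set ℝ), DifferentiableAt ℝ f z :=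
      fun z _ => (hf.differentiable two_ne_zero).differentiableAt
    have hbd : ∀ z ∈ (Set.univ : Set ℝ), ‖deriv f z‖ ≤ M := fun z _ => by
      simpa [Real.norm_eq_abs] using hf'bdd z
    have := convex_univ.norm_image_sub_le_of_norm_deriv_le hdiff hbd
      (Set.mem_univ y) (Set.mem_univ x)
    simpa [Real.norm_eq_abs] using this
  refine ⟨6 * M ^ 3 + 1, by positivity, ?_⟩
  intro s t b hb
  have hbne : b ≠ 0 := hb.ne'
  by_cases hl : (∫ x, (K x) ^ 2) = 0
  · -- degenerate case : K ≡ 0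
    have hintK2 : Integrable (fun x => (K x) ^ 2) :=
      (hKc.pow 2).integrable_of_hasCompactSupport
        (HasCompactSupport.intro isCompact_Icc (fun x hx => by rw [Pi.pow_apply, hsupp x hx]; ring))
    have hae : (fun x => (K x) ^ 2) =ᵐ[volume] 0 :=
      (integral_eq_zero_iff_of_nonneg (fun x => sq_nonneg _) hintK2).mp hl
    have hKzero : ∀ x, K x = 0 := by
      have heq : (fun x => (K x) ^ 2) = (0 : ℝ → ℝ) :=
        ((hKc.pow 2).ae_eq_iff_eq volume continuous_zero).mp hae
      intro x
      have := congrFun heq x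
      simpa [pow_eq_zero_iff] using this
    simp only [hKzero, zero_mul, integral_zero, zero_pow, mul_zero, zero_div, sub_zero,
      abs_zero]
    positivity
  · set u : ℝ := s - t with hu
    -- cancel the division
    have hdiv : b * Real.sqrt (f (b * s) * f (b * t)) * (∫ x, (K x) ^ 2)
        * ((∫ x, K x * K (x + u)) / (∫ x, (K x) ^ 2))
        = b * Real.sqrt (f (b * s) * f (b * t)) * (∫ x, K x * K (x + u)) := by
      field_simp
    set c : ℝ := Real.sqrt (f (b * s) * f (b * t)) with hc
    -- integrability facts
    have hsuppKK : ∀ y, y ∉ Set.Icc (-1 : ℝ) 1 → K y * K (y + u) = 0 := fun y hy => by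
      rw [hsupp y hy, zero_mul]
    have hKKc : Continuous fun y => K y * K (y + u) :=
      hKc.mul (hKc.comp (by continuity))
    have hintKK : Integrable (fun y => K y * K (y + u)) :=
      hKKc.integrable_of_hasCompactSupport
        (HasCompactSupport.intro isCompact_Icc hsuppKK)
    have hψc : Continuous fun y => K y * K (y + u) * f (b * (y + s)) :=
      hKKc.mul (hfc.comp (by continuity))
    have hintψ : Integrable (fun y => K y * K (y + u) * f (b * (y + s))) :=
      hψc.integrable_of_hasCompactSupport
        (HasCompactSupport.intro isCompact_Icc (fun y hy => by rw [hsuppKK y hy, zero_mul]))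
    -- substitution
    have hsub : (∫ x, K (x / b - s) * K (x / b - t) * f x)
        = b * ∫ y, K y * K (y + u) * f (b * (y + s)) := by
      set g : ℝ → ℝ := fun x => K (x / b - s) * K (x / b - t) * f x with hg
      have e1 : ∀ y : ℝ, g (b * (y + s)) = K y * K (y + u) * f (b * (y + s)) := by
        intro y
        have h2 : b * (y + s) / b = y + s := by field_simp
        have h3 : y + s - s = y := by ring
        have h4 : y + s - t = y + u := by rw [hu]; ring
        simp only [hg, h2, h3, h4]
      have e2 : (∫ y, K y * K (y + u) * f (b * (y + s))) = ∫ y, g (b * (y + s)) := by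
        congr 1
        funext y
        exact (e1 y).symm
      have e3 : (∫ y, g (b * (y + s))) = ∫ y, g (b * y) := by
        have := integral_add_right_eq_self (μ := volume) (fun y => g (b * y)) s
        simpa using this
      have e4 : (∫ y, g (b * y)) = |b⁻¹| • ∫ x, g x :=
        MeasureTheory.Measure.integral_comp_mul_left g b
      rw [e2, e3, e4, abs_of_pos (inv_pos.mpr hb), smul_eq_mul]
      field_simp
    rw [hdiv, hsub]
    -- rewrite the difference as b * ∫ φ
    have hintc : Integrable (fun y => c * (K y * K (y + u))) := hintKK.const_mul c
    have hre : b * (∫ y, K y * K (y + u) * f (b * (y + s))) - b * c * (∫ x, K x * K (x + u))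
        = b * ∫ y, K y * K (y + u) * (f (b * (y + s)) - c) := by
      have e5 : (∫ y, K y * K (y + u) * (f (b * (y + s)) - c))
          = (∫ y, K y * K (y + u) * f (b * (y + s))) - ∫ y, c * (K y * K (y + u)) := by
        rw [← integral_sub hintψ hintc]
        congr 1
        funext y
        ring
      rw [e5, integral_const_mul]
      ring
    rw [hre]
    -- bound the integral
    set φ : ℝ → ℝ := fun y => K y * K (y + u) * (f (b * (y + s)) - c) with hφ
    have hφbound : ∀ y ∈ Set.Icc (-1 : ℝ) 1, ‖φ y‖ ≤ 3 * M ^ 3 * b := by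
      intro y hy
      by_cases hyu : y + u ∈ Set.Icc (-1 : ℝ) 1
      · -- both in support: |u| ≤ 2 and full estimate
        have hy1 : |y| ≤ 1 := abs_le.mpr hy
        have hyu1 : |y + u| ≤ 1 := abs_le.mpr hyu
        have hu2 : |u| ≤ 2 := by
          have : |u| = |(y + u) - y| := by ring_nf
          rw [this]
          calc |(y + u) - y| ≤ |y + u| + |y| := abs_sub _ _
            _ ≤ 2 := by linarith
        have hd : |f (b * (y + s)) - c| ≤ 3 * M * b := by
          have h1 : |f (b * (y + s)) - f (b * s)| ≤ M * b := by
            have := hflip (b * (y + s)) (b * s)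
            have e : |b * (y + s) - b * s| = b * |y| := by
              rw [show b * (y + s) - b * s = b * y by ring, abs_mul, abs_of_pos hb]
            rw [e] at this
            calc |f (b * (y + s)) - f (b * s)| ≤ M * (b * |y|) := this
              _ ≤ M * (b * 1) := by gcongr
              _ = M * b := by ring
          have h2 : |c - f (b * s)| ≤ 2 * M * b := by
            have hs1 := abs_sqrt_mul_sub (f (b * s)) (f (b * t)) (hfpos _) (hfpos _)
            have h3 : |f (b * t) - f (b * s)| ≤ M * (b * |u|) := by
              have := hflip (b * t) (b * s)
              have e : |b * t - b * s| = b * |u| := by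
                rw [show b * t - b * s = -(b * u) by rw [hu]; ring, abs_neg, abs_mul,
                  abs_of_pos hb]
              rw [e] at this
              exact this
            calc |c - f (b * s)| ≤ |f (b * t) - f (b * s)| := hs1
              _ ≤ M * (b * |u|) := h3
              _ ≤ M * (b * 2) := by gcongr
              _ = 2 * M * b := by ring
          calc |f (b * (y + s)) - c|
              ≤ |f (b * (y + s)) - f (b * s)| + |c - f (b * s)| := by
                rw [show f (b * (y + s)) - c = (f (b * (y + s)) - f (b * s)) - (c - f (b * s))
                  by ring]
                exact abs_sub _ _
            _ ≤ M * b + 2 * M * b := add_le_add h1 h2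
            _ = 3 * M * b := by ring
        have : ‖φ y‖ = |K y| * |K (y + u)| * |f (b * (y + s)) - c| := by
          rw [hφ]; simp [abs_mul]
        rw [this]
        calc |K y| * |K (y + u)| * |f (b * (y + s)) - c|
            ≤ M * M * (3 * M * b) :=
              mul_le_mul (mul_le_mul (hKbdd y) (hKbdd (y + u)) (abs_nonneg _) hM0) hd
                (abs_nonneg _) (by positivity)
          _ = 3 * M ^ 3 * b := by ring
      · -- K (y + u) = 0
        have : φ y = 0 := by rw [hφ]; simp [hsupp _ hyu]
        rw [this]
        simp only [norm_zero]
        positivity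
    have hφ0 : ∀ y ∉ Set.Icc (-1 : ℝ) 1, φ y = 0 := fun y hy => by
      rw [hφ]; simp only; rw [hsuppKK y hy, zero_mul]
    have hφc : Continuous φ := hKKc.mul ((hfc.comp (continuous_const.mul (continuous_id.add continuous_const))).sub continuous_const)
    have heqset : (∫ y, φ y) = ∫ y in Set.Icc (-1 : ℝ) 1, φ y :=
      (setIntegral_eq_integral_of_forall_compl_eq_zero hφ0).symm
    have hbnd : ‖∫ y in Set.Icc (-1 : ℝ) 1, φ y‖
        ≤ (3 * M ^ 3 * b) * (volume (Set.Icc (-1 : ℝ) 1)).toReal :=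
      norm_setIntegral_le_of_norm_le_const measure_Icc_lt_top hφbound
    have hvol : (volume (Set.Icc (-1 : ℝ) 1)).toReal = 2 := by
      rw [Real.volume_Icc]; norm_num
    rw [abs_mul, abs_of_pos hb]
    calc b * |∫ y, φ y| ≤ b * (3 * M ^ 3 * b * 2) := by
          apply mul_le_mul_of_nonneg_left _ hb.le
          rw [heqset]
          calc |∫ y in Set.Icc (-1 : ℝ) 1, φ y|
              ≤ 3 * M ^ 3 * b * (volume (Set.Icc (-1 : ℝ) 1)).toReal := by
                simpa [Real.norm_eq_abs] using hbnd
            _ = 3 * M ^ 3 * b * 2 := by rw [hvol]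
      _ = 6 * M ^ 3 * b ^ 2 := by ring
      _ ≤ (6 * M ^ 3 + 1) * b ^ 2 := by nlinarith [sq_nonneg b]
end
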